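/- There is a universal constant c > 0 such that for every finite undirected graph G = (V,E) with m ≥ 2 edges and every parameter φ ∈ (0,1), there exists a partition V_1, …, V_k of V such that for every i the induced subgraph G[V_i] has conductance Φ_{G[V_i]} ≥ φ, and the total number of inter-cluster edges satisfies ∑_i δ_G(V_i) ≤ c·φ·m·log m. -/
import Mathlib

open Finset

noncomputable section
open scoped Classical

/-- `|E_G(S,T)|`: the number of edges of `G` with one endpoint in `S` and the other in `T`
(for disjoint `S`, `T` this equals the number of such edges). -/
def eCount {V : Type*} [Fintype V] [DecidableEq V] (G : SimpleGraph V) (S T : Finset V) : ℕ :=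
  ((S ×ˢ T).filter fun p => G.Adj p.1 p.2).card

/-- Degree of `v` inside the induced subgraph `G[A]`. -/
def degIn {V : Type*} [Fintype V] [DecidableEq V] (G : SimpleGraph V) (A : Finset V) (v : V) : ℕ :=
  (A.filter fun u => G.Adj v u).card

/-- Volume of `S` inside the induced subgraph `G[A]`. -/
def volIn {V : Type*} [Fintype V] [DecidableEq V] (G : SimpleGraph V) (A S : Finset V) : ℕ :=
  ∑ v ∈ S, degIn G A v

section Helpers

variable {V : Type*} [Fintype V] [DecidableEq V] (G : SimpleGraph V)

lemma eCount_eq_sum (S T : Finset V) :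
    eCount G S T = ∑ v ∈ S, ∑ u ∈ T, if G.Adj v u then 1 else 0 := by
  rw [eCount, Finset.card_filter, Finset.sum_product]

lemma eCount_comm (S T : Finset V) : eCount G S T = eCount G T S := by
  rw [eCount_eq_sum, eCount_eq_sum, Finset.sum_comm]
  simp_rw [SimpleGraph.adj_comm]

lemma volIn_eq_eCount (A S : Finset V) : volIn G A S = eCount G S A := by
  rw [eCount_eq_sum, volIn]
  refine Finset.sum_congr rfl fun v _ => ?_
  rw [degIn, Finset.card_filter]

lemma eCount_union_right {T₁ T₂ : Finset V} (h : Disjoint T₁ T₂) (S : Finset V) :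
    eCount G S (T₁ ∪ T₂) = eCount G S T₁ + eCount G S T₂ := by
  simp_rw [eCount_eq_sum, ← Finset.sum_add_distrib]
  exact Finset.sum_congr rfl fun v _ => Finset.sum_union h

lemma eCount_union_left {S₁ S₂ : Finset V} (h : Disjoint S₁ S₂) (T : Finset V) :
    eCount G (S₁ ∪ S₂) T = eCount G S₁ T + eCount G S₂ T := by
  simp_rw [eCount_eq_sum]
  exact Finset.sum_union h

lemma eCount_sup (Pp : Finset (Finset V)) (h : (Pp : Set (Finset V)).PairwiseDisjoint id)
    (T : Finset V) :
    eCount G (Pp.sup id) T = ∑ B ∈ Pp, eCount G B T := by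
  simp_rw [eCount_eq_sum]
  rw [Finset.sup_eq_biUnion, Finset.sum_biUnion h]
  simp

lemma eCount_mono {S' S T' T : Finset V} (hS : S' ⊆ S) (hT : T' ⊆ T) :
    eCount G S' T' ≤ eCount G S T :=
  Finset.card_le_card (Finset.filter_subset_filter _ (Finset.product_subset_product hS hT))

lemma logb_nat_nonneg (n : ℕ) : 0 ≤ Real.logb 2 n := by
  rcases Nat.eq_zero_or_pos n with h | h
  · simp [h]
  · exact Real.logb_nonneg one_lt_two (by exact_mod_cast h)

lemma xlogb_mono {x y : ℕ} (h : x ≤ y) :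
    (x : ℝ) * Real.logb 2 x ≤ (y : ℝ) * Real.logb 2 y := by
  rcases Nat.eq_zero_or_pos x with h0 | h1
  · simp only [h0, Nat.cast_zero, zero_mul]
    exact mul_nonneg (Nat.cast_nonneg y) (logb_nat_nonneg y)
  · have hx1 : (1 : ℝ) ≤ x := by exact_mod_cast h1
    have hxy : (x : ℝ) ≤ y := by exact_mod_cast h
    have hlog : Real.logb 2 x ≤ Real.logb 2 y :=
      Real.logb_le_logb_of_le one_lt_two (by linarith) hxy
    have h0x : 0 ≤ Real.logb 2 (x : ℝ) := Real.logb_nonneg one_lt_two hx1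
    nlinarith

set_option maxHeartbeats 1000000 in
/-- The key decomposition lemma, by strong induction on an upper bound of the volume. -/
lemma decomp {V : Type} [Fintype V] [DecidableEq V] (G : SimpleGraph V) (φ : ℝ)
    (hφ : 0 < φ) :
    ∀ n : ℕ, ∀ A : Finset V, volIn G A A ≤ n →
      ∃ Pp : Finset (Finset V),
        (Pp : Set (Finset V)).PairwiseDisjoint id ∧
        Pp.sup id = A ∧ (⊥ : Finset V) ∉ Pp ∧
        (∀ B ∈ Pp, ∀ S ⊆ B, S.Nonempty → S ≠ B →
          φ * min (volIn G B S : ℝ) (volIn G B (B \ S) : ℝ) ≤ (eCount G S (B \ S) : ℝ)) ∧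
        ((∑ B ∈ Pp, eCount G B (A \ B) : ℕ) : ℝ) ≤
          2 * φ * (volIn G A A : ℝ) * Real.logb 2 (volIn G A A) := by
  intro n
  induction n using Nat.strong_induction_on with
  | _ n ih =>
  intro A hAn
  by_cases hexp : ∀ S ⊆ A, S.Nonempty → S ≠ A →
      φ * min (volIn G A S : ℝ) (volIn G A (A \ S) : ℝ) ≤ (eCount G S (A \ S) : ℝ)
  · -- A itself is an expander (or empty): one part
    by_cases hAe : A = ∅
    · refine ⟨∅, by simp, by simp [hAe], by simp, by simp, ?_⟩
      have hv : volIn G A A = 0 := by simp [hAe, volIn]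
      simp [hv]
    · refine ⟨{A}, by rw [Finset.coe_singleton]; exact Set.pairwiseDisjoint_singleton _ _,
        by simp, ?_, ?_, ?_⟩
      · simp [Finset.bot_eq_empty, Ne.symm hAe, eq_comm]
      · intro B hB
        rw [Finset.mem_singleton] at hB
        subst hB
        exact hexp
      · have : eCount G A (A \ A) = 0 := by
          simp [Finset.sdiff_self, eCount]
        rw [Finset.sum_singleton, this]
        have h1 : (0:ℝ) ≤ 2 * φ := by linarith
        have h2 : (0:ℝ) ≤ (volIn G A A : ℝ) * Real.logb 2 (volIn G A A) :=
          mul_nonneg (Nat.cast_nonneg _) (logb_nat_nonneg _)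
        push_cast
        nlinarith
  · -- there is a sparse cut S / T = A∖S; recurse on both sides
    push_neg at hexp
    obtain ⟨S, hSA, hSne, hSneA, hlt⟩ := hexp
    set T := A \ S with hT
    have hST : Disjoint S T := Finset.disjoint_sdiff
    have hSTA : S ∪ T = A := Finset.union_sdiff_of_subset hSA
    set a := volIn G A S with ha
    set b := volIn G A T with hb
    have hab : a + b = volIn G A A := by
      rw [ha, hb, volIn_eq_eCount, volIn_eq_eCount, volIn_eq_eCount,
        ← eCount_union_left G hST, hSTA]
    -- both sides have positive volume
    have hmin : (0 : ℝ) < min (a : ℝ) (b : ℝ) := by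
      by_contra h
      push_neg at h
      have : φ * min (a : ℝ) (b : ℝ) ≤ 0 := mul_nonpos_of_nonneg_of_nonpos (le_of_lt hφ) h
      have h0 : (0:ℝ) ≤ (eCount G S T : ℝ) := Nat.cast_nonneg _
      linarith
    have ha1 : 1 ≤ a := by
      have := (lt_min_iff.mp hmin).1
      have : 0 < a := by exact_mod_cast this
      omega
    have hb1 : 1 ≤ b := by
      have := (lt_min_iff.mp hmin).2
      have : 0 < b := by exact_mod_cast this
      omega
    have hvS : volIn G S S ≤ a := by
      rw [ha, volIn_eq_eCount, volIn_eq_eCount]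
      exact eCount_mono G (le_refl S) hSA
    have hvT : volIn G T T ≤ b := by
      rw [hb, volIn_eq_eCount, volIn_eq_eCount]
      exact eCount_mono G (le_refl T) (Finset.sdiff_subset)
    have haltn : a < n := by omega
    have hbltn : b < n := by omega
    obtain ⟨PS, hPSd, hPSs, hPSb, hPSe, hPSc⟩ := ih a haltn S hvS
    obtain ⟨PT, hPTd, hPTs, hPTb, hPTe, hPTc⟩ := ih b hbltn T hvT
    have hPS_sub : ∀ B ∈ PS, B ⊆ S := fun B hB => hPSs ▸ Finset.le_sup (f := id) hB
    have hPT_sub : ∀ B ∈ PT, B ⊆ T := fun B hB => hPTs ▸ Finset.le_sup (f := id) hB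
    have hPSPT : Disjoint PS PT := by
      rw [Finset.disjoint_left]
      intro B hB1 hB2
      have hBne : B.Nonempty := Finset.nonempty_iff_ne_empty.mpr fun h => hPSb
        (by rw [Finset.bot_eq_empty, ← h]; exact hB1)
      obtain ⟨x, hx⟩ := hBne
      exact (Finset.disjoint_left.mp hST (hPS_sub B hB1 hx) (hPT_sub B hB2 hx))
    refine ⟨PS ∪ PT, ?_, ?_, ?_, ?_, ?_⟩
    · -- pairwise disjoint
      intro x hx y hy hxy
      simp only [Finset.coe_union, Set.mem_union, Finset.mem_coe] at hx hy
      rcases hx with hx | hx <;> rcases hy with hy | hy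
      · exact hPSd hx hy hxy
      · exact Disjoint.mono (hPS_sub x hx) (hPT_sub y hy) hST
      · exact Disjoint.mono (hPT_sub x hx) (hPS_sub y hy) hST.symm
      · exact hPTd hx hy hxy
    · rw [Finset.sup_union, hPSs, hPTs, ← hSTA]
      rfl
    · rw [Finset.mem_union]
      rintro (h | h)
      · exact hPSb h
      · exact hPTb h
    · intro B hB
      rw [Finset.mem_union] at hB
      rcases hB with h | h
      · exact hPSe B h
      · exact hPTe B h
    · -- the cut bound
      rw [Finset.sum_union hPSPT]
      have keyS : ∀ B ∈ PS, eCount G B (A \ B) = eCount G B (S \ B) + eCount G B T := by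
        intro B hB
        have hd : A \ B = (S \ B) ∪ T := by
          rw [← hSTA, Finset.union_sdiff_distrib]
          congr 1
          exact Finset.sdiff_eq_self_iff_disjoint.mpr
            (Disjoint.mono_left (hPS_sub B hB) hST).symm
        rw [hd, eCount_union_right G
          (Finset.disjoint_of_subset_left (Finset.sdiff_subset) hST)]
      have keyT : ∀ B ∈ PT, eCount G B (A \ B) = eCount G B (T \ B) + eCount G B S := by
        intro B hB
        have hd : A \ B = (T \ B) ∪ S := by
          rw [← hSTA, Finset.union_comm S T, Finset.union_sdiff_distrib]
          congr 1
          exact Finset.sdiff_eq_self_iff_disjoint.mpr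
            (Disjoint.mono_left (hPT_sub B hB) hST.symm).symm
        rw [hd, eCount_union_right G
          (Finset.disjoint_of_subset_left (Finset.sdiff_subset) hST.symm)]
      have hsumS : ∑ B ∈ PS, eCount G B (A \ B)
          = (∑ B ∈ PS, eCount G B (S \ B)) + eCount G S T := by
        rw [Finset.sum_congr rfl keyS, Finset.sum_add_distrib]
        congr 1
        rw [← eCount_sup G PS hPSd, hPSs]
      have hsumT : ∑ B ∈ PT, eCount G B (A \ B)
          = (∑ B ∈ PT, eCount G B (T \ B)) + eCount G S T := by
        rw [Finset.sum_congr rfl keyT, Finset.sum_add_distrib]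
        congr 1
        rw [← eCount_sup G PT hPTd, hPTs, eCount_comm]
      rw [hsumS, hsumT]
      -- real arithmetic
      set e : ℕ := eCount G S T with he
      have hlt' : (e : ℝ) < φ * min (a : ℝ) (b : ℝ) := hlt
      have h2φ : (0:ℝ) ≤ 2 * φ := by linarith
      have hCS : ((∑ B ∈ PS, eCount G B (S \ B) : ℕ) : ℝ)
          ≤ 2 * φ * (a : ℝ) * Real.logb 2 a := by
        refine le_trans hPSc ?_
        have h := mul_le_mul_of_nonneg_left (xlogb_mono hvS) h2φ
        nlinarith [h]
      have hCT : ((∑ B ∈ PT, eCount G B (T \ B) : ℕ) : ℝ)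
          ≤ 2 * φ * (b : ℝ) * Real.logb 2 b := by
        refine le_trans hPTc ?_
        have h := mul_le_mul_of_nonneg_left (xlogb_mono hvT) h2φ
        nlinarith [h]
      have hra : (1 : ℝ) ≤ (a : ℝ) := by exact_mod_cast ha1
      have hrb : (1 : ℝ) ≤ (b : ℝ) := by exact_mod_cast hb1
      -- key log inequality
      have hkey : (a : ℝ) * Real.logb 2 a + (b : ℝ) * Real.logb 2 b + min (a:ℝ) (b:ℝ)
          ≤ ((a : ℝ) + b) * Real.logb 2 ((a : ℝ) + b) := by
        have habpos : (0 : ℝ) < (a : ℝ) + b := by linarith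
        have hhalf : Real.logb 2 (((a:ℝ) + b) / 2) = Real.logb 2 ((a:ℝ)+b) - 1 := by
          rw [Real.logb_div (by linarith) (by norm_num), Real.logb_self_eq_one] <;> norm_num
        rcases le_total (a : ℝ) (b : ℝ) with hab' | hab'
        · rw [min_eq_left hab']
          have h1 : Real.logb 2 (a:ℝ) ≤ Real.logb 2 (((a:ℝ)+b)/2) :=
            Real.logb_le_logb_of_le one_lt_two (by linarith) (by linarith)
          have h2 : Real.logb 2 (b:ℝ) ≤ Real.logb 2 ((a:ℝ)+b) :=
            Real.logb_le_logb_of_le one_lt_two (by linarith) (by linarith)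
          rw [hhalf] at h1
          nlinarith
        · rw [min_eq_right hab']
          have h1 : Real.logb 2 (b:ℝ) ≤ Real.logb 2 (((a:ℝ)+b)/2) :=
            Real.logb_le_logb_of_le one_lt_two (by linarith) (by linarith)
          have h2 : Real.logb 2 (a:ℝ) ≤ Real.logb 2 ((a:ℝ)+b) :=
            Real.logb_le_logb_of_le one_lt_two (by linarith) (by linarith)
          rw [hhalf] at h1
          nlinarith
      have hvab : ((volIn G A A : ℕ) : ℝ) = (a : ℝ) + b := by
        rw [← hab]; push_cast; ring
      rw [Nat.cast_add, Nat.cast_add, Nat.cast_add, hvab]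
      have hk2 := mul_le_mul_of_nonneg_left hkey h2φ
      linarith [hCS, hCT, hlt'.le, hk2]

end Helpers

theorem ideal_expander_decomposition :
    ∃ c : ℝ, 0 < c ∧
      ∀ (V : Type) [Fintype V] [DecidableEq V] (G : SimpleGraph V) (φ : ℝ),
        2 ≤ G.edgeFinset.card → 0 < φ → φ < 1 →
        ∃ P : Finpartition (Finset.univ : Finset V),
          -- every cluster induces a subgraph of conductance at least φ
          (∀ A ∈ P.parts, ∀ S ⊆ A, S.Nonempty → S ≠ A →
            φ * min (volIn G A S : ℝ) (volIn G A (A \ S) : ℝ) ≤ (eCount G S (A \ S) : ℝ)) ∧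
          -- the total number of inter-cluster edges is at most c·φ·m·log m
          ((∑ A ∈ P.parts, eCount G A Aᶜ : ℕ) : ℝ) ≤
            c * φ * G.edgeFinset.card * Real.log G.edgeFinset.card := by
  refine ⟨8 / Real.log 2, by positivity, ?_⟩
  intro V _ _ G φ hm hφ0 hφ1
  obtain ⟨Pp, hdisj, hsup, hbot, hexp, hcut⟩ :=
    decomp G φ hφ0 (volIn G univ univ) univ le_rfl
  refine ⟨⟨Pp, Finset.supIndep_iff_pairwiseDisjoint.mpr hdisj, hsup, hbot⟩, hexp, ?_⟩
  have hdeg : ∀ v : V, degIn G univ v = G.degree v := by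
    intro v
    rw [degIn, SimpleGraph.degree, SimpleGraph.neighborFinset_eq_filter]
  have hV : volIn G (univ : Finset V) univ = 2 * G.edgeFinset.card := by
    rw [volIn]
    simp_rw [hdeg]
    exact SimpleGraph.sum_degrees_eq_twice_card_edges G
  set m : ℕ := G.edgeFinset.card with hmdef
  have hcut' : ((∑ A ∈ Pp, eCount G A Aᶜ : ℕ) : ℝ) ≤
      2 * φ * ((2 * m : ℕ) : ℝ) * Real.logb 2 ((2 * m : ℕ) : ℝ) := by
    simp_rw [Finset.compl_eq_univ_sdiff]
    rw [← hV]
    exact hcut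
  have hm2 : (2 : ℝ) ≤ (m : ℝ) := by exact_mod_cast hm
  have hlog2 : (0 : ℝ) < Real.log 2 := Real.log_pos one_lt_two
  have hlogm : Real.log 2 ≤ Real.log m := Real.log_le_log (by norm_num) hm2
  have hlogb : Real.logb 2 ((2 * m : ℕ) : ℝ) ≤ 2 * Real.log m / Real.log 2 := by
    push_cast
    rw [Real.logb, Real.log_mul (by norm_num) (by linarith)]
    rw [div_le_div_iff_of_pos_right hlog2]
    linarith
  calc ((∑ A ∈ Pp, eCount G A Aᶜ : ℕ) : ℝ)
      ≤ 2 * φ * ((2 * m : ℕ) : ℝ) * Real.logb 2 ((2 * m : ℕ) : ℝ) := hcut'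
    _ ≤ 2 * φ * ((2 * m : ℕ) : ℝ) * (2 * Real.log m / Real.log 2) := by
        have h0 : (0:ℝ) ≤ 2 * φ * ((2 * m : ℕ) : ℝ) := by positivity
        exact mul_le_mul_of_nonneg_left hlogb h0
    _ = 8 / Real.log 2 * φ * m * Real.log m := by
        push_cast
        field_simp
        ring
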